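/- Let G, H be Polish groups and φ : G → H a continuous homomorphism such that φ(G) is closed in H and ker(φ) is non-archimedean. Then for every sequence x ∈ G^ω with lim_p x(p) = 1_G, the partial products (x(0)···x(p))_p are ι-Cauchy in G if and only if the partial products (φ(x(0))···φ(x(p)))_p are ι-Cauchy in H. -/

import Mathlib

open Filter Topology

/-- The partial product `x(0) ⋯ x(n)`. -/
def partialProd {G : Type*} [Monoid G] (x : ℕ → G) (n : ℕ) : G :=
  ((List.range (n + 1)).map x).prod

/-- A sequence is ι-Cauchy if it is Cauchy for some compatible left-invariant metric. -/
def IotaCauchy {G : Type*} [Group G] [t : TopologicalSpace G] (u : ℕ → G) : Prop :=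
  ∃ m : MetricSpace G, m.toUniformSpace.toTopologicalSpace = t ∧
    (∀ g h k : G, @dist G m.toDist (g * h) (g * k) = @dist G m.toDist h k) ∧
    @CauchySeq G ℕ m.toUniformSpace _ u

/-- A topological group is non-archimedean if it has a neighborhood basis of the identity
consisting of open subgroups. -/
def NonArchimedeanGroup (G : Type*) [Group G] [TopologicalSpace G] : Prop :=
  ∀ U ∈ 𝓝 (1 : G), ∃ K : Subgroup G, IsOpen (K : Set G) ∧ (K : Set G) ⊆ U

section Auxiliary

open Set MeasureTheory Pointwise

section Metric
variable (G : Type*) [Group G] [TopologicalSpace G] [IsTopologicalGroup G] [PolishSpace G]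

theorem exists_leftInvariant_metric :
    ∃ m : MetricSpace G, m.toUniformSpace.toTopologicalSpace = ‹TopologicalSpace G› ∧
      ∀ g h k : G, @dist G m.toDist (g * h) (g * k) = @dist G m.toDist h k := by
  letI u : UniformSpace G := IsTopologicalGroup.rightUniformSpace G
  haveI hcg : (@uniformity G u).IsCountablyGenerated := by
    have h : @uniformity G u = comap (fun p : G × G => p.2 / p.1) (𝓝 1) :=
      by rw [uniformity_eq_comap_nhds_one' G]; simp only [div_eq_mul_inv]
    rw [h]
    exact Filter.comap.isCountablyGenerated _ _
  obtain ⟨pm, hpm⟩ := UniformSpace.metrizable_uniformity G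
  set d0 : G → G → ℝ := @dist G pm.toDist with hd0
  have hud : @uniformity G pm.toUniformSpace = comap (fun p : G × G => p.2 / p.1) (𝓝 1) := by
    rw [hpm, uniformity_eq_comap_nhds_one' G]; simp only [div_eq_mul_inv]
  -- (α)
  have halpha : ∀ ε : ℝ, 0 < ε → ∃ V ∈ 𝓝 (1 : G), ∀ g h : G, h / g ∈ V → d0 g h < ε := by
    intro ε hε
    have h1 : {p : G × G | d0 p.1 p.2 < ε} ∈ @uniformity G pm.toUniformSpace :=
      @Metric.dist_mem_uniformity G pm ε hε
    rw [hud, Filter.mem_comap] at h1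
    obtain ⟨V, hV, hsub⟩ := h1
    exact ⟨V, hV, fun g h hgh => hsub (show ((g, h) : G × G) ∈ _ from hgh)⟩
  -- (β)
  have hbeta : ∀ V ∈ 𝓝 (1 : G), ∃ ε : ℝ, 0 < ε ∧ ∀ g h : G, d0 g h < ε → h / g ∈ V := by
    intro V hV
    have h1 : (fun p : G × G => p.2 / p.1) ⁻¹' V ∈ @uniformity G pm.toUniformSpace := by
      rw [hud]; exact preimage_mem_comap hV
    obtain ⟨ε, hε, hsub⟩ := (@Metric.mem_uniformity_dist G pm _).1 h1
    exact ⟨ε, hε, fun g h hd => hsub hd⟩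
  -- the sup-trick right-invariant distance
  set D : G → G → ℝ := fun g h => ⨆ k : G, min 1 (d0 (g * k) (h * k)) with hD
  have bddD : ∀ g h : G, BddAbove (range fun k => min 1 (d0 (g * k) (h * k))) := by
    intro g h
    exact ⟨1, by rintro y ⟨k, rfl⟩; exact min_le_left _ _⟩
  have le_D : ∀ g h k : G, min 1 (d0 (g * k) (h * k)) ≤ D g h := fun g h k =>
    le_ciSup (bddD g h) k
  have Dnonneg : ∀ g h : G, 0 ≤ D g h := fun g h =>
    le_trans (le_min zero_le_one (@dist_nonneg G pm _ _)) (le_D g h 1)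
  have Dself : ∀ g : G, D g g = 0 := by
    intro g
    have h1 : (fun k : G => min 1 (d0 (g * k) (g * k))) = fun _ => (0 : ℝ) := by
      funext k
      have hz : d0 (g * k) (g * k) = 0 := @dist_self G pm (g * k)
      rw [hz]
      exact min_eq_right zero_le_one
    show (⨆ k : G, min 1 (d0 (g * k) (g * k))) = 0
    rw [h1]
    exact ciSup_const
  have Dcomm : ∀ g h : G, D g h = D h g := by
    intro g h
    show (⨆ k : G, min 1 (d0 (g * k) (h * k))) = ⨆ k : G, min 1 (d0 (h * k) (g * k))
    congr 1; funext k
    have hc : d0 (g * k) (h * k) = d0 (h * k) (g * k) := @dist_comm G pm _ _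
    rw [hc]
  have minadd : ∀ x y : ℝ, 0 ≤ x → 0 ≤ y → min 1 (x + y) ≤ min 1 x + min 1 y := by
    intro x y hx hy
    rcases le_total 1 x with h | h
    · calc min 1 (x + y) ≤ 1 := min_le_left _ _
        _ ≤ min 1 x + min 1 y := by
          rw [min_eq_left h]; exact le_add_of_nonneg_right (le_min zero_le_one hy)
    · rcases le_total 1 y with h' | h'
      · calc min 1 (x + y) ≤ 1 := min_le_left _ _
          _ ≤ min 1 x + min 1 y := by
            rw [min_eq_left h']; exact le_add_of_nonneg_left (le_min zero_le_one hx)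
      · calc min 1 (x + y) ≤ x + y := min_le_right _ _
          _ = min 1 x + min 1 y := by rw [min_eq_right h, min_eq_right h']
  have Dtriangle : ∀ a b c : G, D a c ≤ D a b + D b c := by
    intro a b c
    refine ciSup_le fun k => ?_
    calc min 1 (d0 (a * k) (c * k))
        ≤ min 1 (d0 (a * k) (b * k) + d0 (b * k) (c * k)) :=
          min_le_min le_rfl (@dist_triangle G pm _ _ _)
      _ ≤ min 1 (d0 (a * k) (b * k)) + min 1 (d0 (b * k) (c * k)) :=
          minadd _ _ (@dist_nonneg G pm _ _)
            (@dist_nonneg G pm _ _)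
      _ ≤ D a b + D b c := add_le_add (le_D a b k) (le_D b c k)
  have Drinv : ∀ g h a : G, D (g * a) (h * a) = D g h := by
    intro g h a
    have hr : (range fun k : G => min 1 (d0 (g * a * k) (h * a * k))) =
        range fun k : G => min 1 (d0 (g * k) (h * k)) := by
      ext y
      constructor
      · rintro ⟨k, rfl⟩
        refine ⟨a * k, ?_⟩
        show min 1 (d0 (g * (a * k)) (h * (a * k))) = min 1 (d0 (g * a * k) (h * a * k))
        rw [← mul_assoc, ← mul_assoc]
      · rintro ⟨k, rfl⟩
        refine ⟨a⁻¹ * k, ?_⟩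
        show min 1 (d0 (g * a * (a⁻¹ * k)) (h * a * (a⁻¹ * k))) = min 1 (d0 (g * k) (h * k))
        rw [mul_assoc, mul_assoc, mul_inv_cancel_left]
    show sSup (range fun k : G => min 1 (d0 (g * a * k) (h * a * k))) =
      sSup (range fun k : G => min 1 (d0 (g * k) (h * k)))
    rw [hr]
  have hDle : ∀ ε : ℝ, 0 < ε → ∃ V ∈ 𝓝 (1 : G), ∀ g h : G, h / g ∈ V → D g h ≤ ε := by
    intro ε hε
    obtain ⟨V, hV, hVp⟩ := halpha ε hε
    refine ⟨V, hV, fun g h hgh => ciSup_le fun k => ?_⟩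
    have he : (h * k) / (g * k) = h / g := by
      simp [div_eq_mul_inv, mul_inv_rev, mul_assoc]
    exact le_trans (min_le_right _ _) (le_of_lt (hVp _ _ (by rw [he]; exact hgh)))
  have hDlt : ∀ V ∈ 𝓝 (1 : G), ∃ ε : ℝ, 0 < ε ∧ ∀ g h : G, D g h < ε → h / g ∈ V := by
    intro V hV
    obtain ⟨ε₀, hε₀, hp⟩ := hbeta V hV
    refine ⟨min ε₀ 1, lt_min hε₀ one_pos, fun g h hDlt' => ?_⟩
    have h1 : min 1 (d0 (g * 1) (h * 1)) ≤ D g h := le_D g h 1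
    rw [mul_one, mul_one] at h1
    have h2 : min 1 (d0 g h) < min ε₀ 1 := lt_of_le_of_lt h1 hDlt'
    have h3 : d0 g h < ε₀ := by
      rcases le_total 1 (d0 g h) with h4 | h4
      · rw [min_eq_left h4] at h2
        have := min_le_right ε₀ 1
        linarith
      · rw [min_eq_right h4] at h2
        exact lt_of_lt_of_le h2 (min_le_left _ _)
    exact hp g h h3
  -- the left-invariant distance
  set dL : G → G → ℝ := fun g h => D g⁻¹ h⁻¹ with hdL
  have Hopen : ∀ s : Set G, IsOpen s ↔ ∀ x ∈ s, ∃ ε > 0, ∀ y, dL x y < ε → y ∈ s := by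
    intro s
    constructor
    · intro hs x hx
      have hV0 : (fun v : G => x * v) ⁻¹' s ∈ 𝓝 (1 : G) := by
        refine ContinuousAt.preimage_mem_nhds (Continuous.continuousAt ?_) ?_
        · exact continuous_const.mul continuous_id
        · rw [mul_one]; exact hs.mem_nhds hx
      obtain ⟨ε, hε, hp⟩ := hDlt _ hV0
      refine ⟨ε, hε, fun y hy => ?_⟩
      have h1 : D y⁻¹ x⁻¹ < ε := by rw [← Dcomm]; exact hy
      have h2 := hp y⁻¹ x⁻¹ h1
      have h3 : x⁻¹ / y⁻¹ = x⁻¹ * y := by rw [div_inv_eq_mul]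
      rw [h3] at h2
      have := h2
      simpa [mul_inv_cancel_left] using this
    · intro hcond
      rw [isOpen_iff_mem_nhds]
      intro x hx
      obtain ⟨ε, hε, hp⟩ := hcond x hx
      obtain ⟨V, hV, hVp⟩ := hDle (ε / 2) (half_pos hε)
      have hS' : (fun h : G => h⁻¹ * x) ⁻¹' V ∈ 𝓝 x := by
        refine ContinuousAt.preimage_mem_nhds (Continuous.continuousAt ?_) ?_
        · exact continuous_inv.mul continuous_const
        · rw [inv_mul_cancel]; exact hV
      refine mem_of_superset hS' ?_
      intro h hh
      have h1 : h⁻¹ / x⁻¹ ∈ V := by rw [div_inv_eq_mul]; exact hh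
      have h2 : D x⁻¹ h⁻¹ ≤ ε / 2 := hVp x⁻¹ h⁻¹ h1
      exact hp h (by show D x⁻¹ h⁻¹ < ε; linarith)
  have heq0 : ∀ x y : G, dL x y = 0 → x = y := by
    intro x y hxy
    have h1 : min 1 (d0 (x⁻¹ * 1) (y⁻¹ * 1)) ≤ 0 := by
      rw [← hxy]; exact le_D x⁻¹ y⁻¹ 1
    rw [mul_one, mul_one] at h1
    have h2 : 0 ≤ min 1 (d0 x⁻¹ y⁻¹) :=
      le_min zero_le_one (@dist_nonneg G pm _ _)
    have h3 : min 1 (d0 x⁻¹ y⁻¹) = 0 := le_antisymm h1 h2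
    have h4 : d0 x⁻¹ y⁻¹ = 0 := by
      rcases le_total 1 (d0 x⁻¹ y⁻¹) with h | h
      · rw [min_eq_left h] at h3; linarith
      · rwa [min_eq_right h] at h3
    have h5 : @Inseparable G pm.toUniformSpace.toTopologicalSpace x⁻¹ y⁻¹ :=
      (@Metric.inseparable_iff G pm _ _).2 h4
    have h6 : pm.toUniformSpace.toTopologicalSpace = ‹TopologicalSpace G› := by rw [hpm]; rfl
    rw [h6] at h5
    exact inv_injective h5.eq
  refine ⟨MetricSpace.ofDistTopology dL
      (fun x => by show D x⁻¹ x⁻¹ = 0; exact Dself _)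
      (fun x y => by show D x⁻¹ y⁻¹ = D y⁻¹ x⁻¹; exact Dcomm _ _)
      (fun x y z => by show D x⁻¹ z⁻¹ ≤ D x⁻¹ y⁻¹ + D y⁻¹ z⁻¹; exact Dtriangle _ _ _)
      Hopen heq0, rfl, ?_⟩
  intro g h k
  show dL (g * h) (g * k) = dL h k
  show D (g * h)⁻¹ (g * k)⁻¹ = D h⁻¹ k⁻¹
  rw [mul_inv_rev, mul_inv_rev]
  exact Drinv h⁻¹ k⁻¹ g⁻¹

end Metric


def LeftCauchy {G : Type*} [Group G] [TopologicalSpace G] (u : ℕ → G) : Prop :=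
  ∀ V ∈ 𝓝 (1 : G), ∃ N, ∀ m n, N ≤ m → N ≤ n → (u m)⁻¹ * u n ∈ V

theorem iotaCauchy_iff_leftCauchy {G : Type*} [Group G] [TopologicalSpace G]
    [IsTopologicalGroup G] [PolishSpace G] (u : ℕ → G) : IotaCauchy u ↔ LeftCauchy u := by
  constructor
  · rintro ⟨m, hcompat, hinv, hcauchy⟩ V hV
    rw [← hcompat] at hV
    obtain ⟨ε, hε, hball⟩ := (@Metric.nhds_basis_ball G m.toPseudoMetricSpace 1).mem_iff.1 hV
    obtain ⟨N, hN⟩ := (@Metric.cauchySeq_iff G ℕ m.toPseudoMetricSpace _ _ u).1 hcauchy ε hε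
    refine ⟨N, fun p q hp hq => ?_⟩
    apply hball
    have h1 := hinv (u p) ((u p)⁻¹ * u q) 1
    rw [mul_inv_cancel_left, mul_one] at h1
    show (u p)⁻¹ * u q ∈ Metric.ball (1 : G) ε
    rw [Metric.mem_ball]
    rw [← h1]
    exact hN q hq p hp
  · intro hlc
    obtain ⟨m, hcompat, hinv⟩ := exists_leftInvariant_metric G
    refine ⟨m, hcompat, hinv, ?_⟩
    rw [@Metric.cauchySeq_iff G ℕ m.toPseudoMetricSpace _ _ u]
    intro ε hε
    have hb : Metric.ball (1 : G) ε ∈ @nhds G m.toUniformSpace.toTopologicalSpace 1 :=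
      @Metric.ball_mem_nhds G m.toPseudoMetricSpace 1 ε hε
    rw [hcompat] at hb
    obtain ⟨N, hN⟩ := hlc _ hb
    refine ⟨N, fun p hp q hq => ?_⟩
    have h1 := hinv (u p)⁻¹ (u p) (u q)
    rw [inv_mul_cancel] at h1
    rw [← h1]
    have h2 := hN p q hp hq
    rw [Metric.mem_ball] at h2
    calc @dist G m.toDist 1 ((u p)⁻¹ * u q) = @dist G m.toDist ((u p)⁻¹ * u q) 1 :=
          @dist_comm G m.toPseudoMetricSpace _ _
      _ < ε := h2


section BP
variable {X : Type*} [TopologicalSpace X]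

lemma isMeagre_sUnion' {S : Set (Set X)} (hc : S.Countable) (h : ∀ s ∈ S, IsMeagre s) :
    IsMeagre (⋃₀ S) := by
  rw [IsMeagre, Set.compl_sUnion]
  exact (countable_sInter_mem (hc.image _)).2 (by rintro t ⟨s, hs, rfl⟩; exact h s hs)

lemma isMeagre_iUnion' {ι : Sort*} [Countable ι] {f : ι → Set X} (h : ∀ i, IsMeagre (f i)) :
    IsMeagre (⋃ i, f i) := by
  rw [IsMeagre, Set.compl_iUnion]
  exact countable_iInter_mem.2 fun i => h i

lemma isMeagre_union {s t : Set X} (hs : IsMeagre s) (ht : IsMeagre t) : IsMeagre (s ∪ t) := by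
  rw [IsMeagre, Set.compl_union]
  exact Filter.inter_mem hs ht

/-- The largest open set meeting `S` in a meager set. -/
def bU (S : Set X) : Set X := ⋃₀ {V : Set X | IsOpen V ∧ IsMeagre (V ∩ S)}

lemma bU_open (S : Set X) : IsOpen (bU S) := isOpen_sUnion fun V hV => hV.1

lemma subset_bU {S V : Set X} (hV : IsOpen V) (hm : IsMeagre (V ∩ S)) : V ⊆ bU S :=
  subset_sUnion_of_mem ⟨hV, hm⟩

lemma isMeagre_bU_inter [SecondCountableTopology X] (S : Set X) : IsMeagre (bU S ∩ S) := by
  obtain ⟨T, hTc, hTsub, hTU⟩ :=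
    TopologicalSpace.isOpen_sUnion_countable {V : Set X | IsOpen V ∧ IsMeagre (V ∩ S)}
      (fun V hV => hV.1)
  have hsub : bU S ∩ S ⊆ ⋃₀ ((fun V => V ∩ S) '' T) := by
    rintro x ⟨hx1, hx2⟩
    rw [show bU S = ⋃₀ T from hTU.symm] at hx1
    obtain ⟨V, hV, hxV⟩ := hx1
    exact ⟨V ∩ S, ⟨V, hV, rfl⟩, hxV, hx2⟩
  exact (isMeagre_sUnion' (hTc.image _)
    (by rintro t ⟨V, hV, rfl⟩; exact (hTsub hV).2)).mono hsub

/-- The "Baire hull" of `S`: a closed set containing `S` modulo meager. -/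
def bH (S : Set X) : Set X := (bU S)ᶜ

lemma bH_closed (S : Set X) : IsClosed (bH S) := (bU_open S).isClosed_compl

lemma bH_subset_closure (S : Set X) : bH S ⊆ closure S := by
  intro x hx
  by_contra h
  exact hx (subset_bU isClosed_closure.isOpen_compl
    ((IsMeagre.empty).mono fun y ⟨hy1, hy2⟩ => hy1 (subset_closure hy2)) h)

lemma subset_bH_union (S : Set X) : S ⊆ bH S ∪ (bU S ∩ S) := by
  intro x hx
  by_cases h : x ∈ bU S
  · exact Or.inr ⟨h, hx⟩
  · exact Or.inl h

lemma isMeagre_frontier_of_isOpen {O : Set X} (hO : IsOpen O) : IsMeagre (frontier O) := by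
  rw [IsMeagre]
  apply residual_of_dense_open isClosed_frontier.isOpen_compl
  rw [← interior_eq_empty_iff_dense_compl, ← frontier_compl]
  exact interior_frontier hO.isClosed_compl

lemma bH_diff_meagre {S B M₀ : Set X} (hB : BaireMeasurableSet B) (hM : IsMeagre M₀)
    (hSB : S ⊆ B ∪ M₀) : IsMeagre (bH S \ B) := by
  obtain ⟨O, hO, hBO⟩ := hB.residualEq_isOpen
  set M₁ : Set X := {x | (x ∈ B) = (x ∈ O)}ᶜ with hM₁def
  have hM₁ : IsMeagre M₁ := by rw [IsMeagre, compl_compl]; exact hBO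
  have hP : ((closure O)ᶜ : Set X) ⊆ bU S := by
    apply subset_bU isClosed_closure.isOpen_compl
    refine (isMeagre_union hM₁ hM).mono ?_
    rintro x ⟨hx1, hx2⟩
    rcases hSB hx2 with hB' | hM'
    · left
      intro hE
      exact hx1 (subset_closure (hE ▸ hB'))
    · right; exact hM'
  have hcl : bH S ⊆ closure O := by
    intro x hx
    by_contra h
    exact hx (hP h)
  have hsub : bH S \ B ⊆ (closure O \ O) ∪ M₁ := by
    rintro x ⟨hx1, hx2⟩
    by_cases hxO : x ∈ O
    · right
      intro hE
      exact hx2 (hE.symm ▸ hxO)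
    · left; exact ⟨hcl hx1, hxO⟩
  refine (isMeagre_union ?_ hM₁).mono hsub
  have := isMeagre_frontier_of_isOpen hO
  rwa [hO.frontier_eq] at this

end BP

section AnalyticBP

theorem AnalyticSet.baireMeasurableSet {X : Type*} [TopologicalSpace X] [PolishSpace X]
    {s : Set X} (hs : MeasureTheory.AnalyticSet s) : BaireMeasurableSet s := by
  rw [MeasureTheory.AnalyticSet] at hs
  rcases hs with rfl | ⟨f, hf, rfl⟩
  · exact IsMeagre.empty.baireMeasurableSet
  letI := TopologicalSpace.upgradeIsCompletelyMetrizable X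
  -- cylinders
  set cyl : List ℕ → Set (ℕ → ℕ) :=
    fun s => {y : ℕ → ℕ | ∀ i < s.length, y i = s.getD i 0} with hcyl
  set A : List ℕ → Set X := fun s => f '' cyl s with hA
  have hcylsucc : ∀ s : List ℕ, cyl s = ⋃ n : ℕ, cyl (s ++ [n]) := by
    intro s
    ext y
    simp only [mem_iUnion]
    constructor
    · intro hy
      refine ⟨y s.length, fun i hi => ?_⟩
      rw [List.length_append, List.length_singleton] at hi
      rcases Nat.lt_succ_iff_lt_or_eq.1 hi with h | h
      · rw [List.getD_append _ _ _ _ h]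
        exact hy i h
      · subst h
        rw [List.getD_append_right _ _ _ _ le_rfl, Nat.sub_self]
        rfl
    · rintro ⟨n, hy⟩ i hi
      have h1 : i < (s ++ [n]).length := by
        rw [List.length_append, List.length_singleton]; omega
      rw [← List.getD_append s [n] 0 i hi]
      exact hy i h1
  have hAsucc : ∀ s : List ℕ, A s = ⋃ n : ℕ, A (s ++ [n]) := by
    intro s
    show f '' cyl s = ⋃ n : ℕ, f '' cyl (s ++ [n])
    rw [hcylsucc s, image_iUnion]
  have hrange : Set.range f = A [] := by
    show Set.range f = f '' cyl []
    have : cyl [] = univ := by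
      ext y; simp [hcyl]
    rw [this, image_univ]
  set M : Set X := ⋃ s : List ℕ, (bH (A s) \ ⋃ n : ℕ, bH (A (s ++ [n]))) with hM
  have hMmeagre : IsMeagre M := by
    refine isMeagre_iUnion' fun s => ?_
    refine bH_diff_meagre (B := ⋃ n : ℕ, bH (A (s ++ [n])))
      (M₀ := ⋃ n : ℕ, (bU (A (s ++ [n])) ∩ A (s ++ [n]))) ?_ ?_ ?_
    · exact BaireMeasurableSet.iUnion fun n => ((bU_open _).baireMeasurableSet).compl
    · exact isMeagre_iUnion' fun n => isMeagre_bU_inter _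
    · rw [hAsucc s]
      rintro x hx
      rw [mem_iUnion] at hx
      obtain ⟨n, hxn⟩ := hx
      rcases subset_bH_union (A (s ++ [n])) hxn with h | h
      · exact Or.inl (mem_iUnion.2 ⟨n, h⟩)
      · exact Or.inr (mem_iUnion.2 ⟨n, h⟩)
  -- main inclusion: the hull minus M is contained in the range
  have hmain : bH (A []) \ M ⊆ Set.range f := by
    rintro x ⟨hx, hxM⟩
    have step : ∀ s : List ℕ, x ∈ bH (A s) → ∃ n, x ∈ bH (A (s ++ [n])) := by
      intro s hs'
      by_contra h
      push_neg at h
      exact hxM (mem_iUnion.2 ⟨s, hs', by simpa [mem_iUnion] using h⟩)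
    let F : ℕ → Σ' s : List ℕ, x ∈ bH (A s) := fun k =>
      Nat.rec ⟨[], hx⟩ (fun _ p =>
        ⟨p.1 ++ [Classical.choose (step p.1 p.2)], Classical.choose_spec (step p.1 p.2)⟩) k
    have hFsucc : ∀ k, (F (k + 1)).1 = (F k).1 ++ [Classical.choose (step (F k).1 (F k).2)] :=
      fun k => rfl
    have hFlen : ∀ k, (F k).1.length = k := by
      intro k
      induction k with
      | zero => rfl
      | succ k ih => rw [hFsucc k, List.length_append, List.length_singleton, ih]
    set z : ℕ → ℕ := fun i => (F (i + 1)).1.getD i 0 with hz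
    have hpref : ∀ k i, i < k → (F k).1.getD i 0 = z i := by
      intro k
      induction k with
      | zero => intro i hi; omega
      | succ k ih =>
        intro i hi
        rcases Nat.lt_succ_iff_lt_or_eq.1 hi with h | h
        · rw [hFsucc k, List.getD_append _ _ _ _ (by rw [hFlen]; exact h)]
          exact ih i h
        · subst h
          rfl
    have hcylk : ∀ k, x ∈ closure (f '' {y : ℕ → ℕ | ∀ i < k, y i = z i}) := by
      intro k
      have h1 : x ∈ bH (A (F k).1) := (F k).2
      have h2 : cyl (F k).1 = {y : ℕ → ℕ | ∀ i < k, y i = z i} := by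
        ext y
        simp only [hcyl, mem_setOf_eq, hFlen]
        constructor
        · intro h i hik
          rw [h i hik, hpref k i hik]
        · intro h i hik
          rw [h i hik, ← hpref k i hik]
      have h3 := bH_subset_closure (A (F k).1) h1
      rw [show A (F k).1 = f '' cyl (F k).1 from rfl, h2] at h3
      exact h3
    -- cylinders of z form a basis of neighborhoods of z
    have hbasis : ∀ S ∈ 𝓝 z, ∃ k, {y : ℕ → ℕ | ∀ i < k, y i = z i} ⊆ S := by
      intro S hS
      rw [nhds_pi, Filter.mem_pi] at hS
      obtain ⟨I, hIfin, V, hV, hVS⟩ := hS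
      obtain ⟨b, hb⟩ := hIfin.bddAbove
      refine ⟨b + 1, fun y hy => hVS ?_⟩
      intro i hi
      rw [hy i (Nat.lt_succ_of_le (hb hi))]
      exact mem_of_mem_nhds (hV i)
    have hxeq : x = f z := by
      have hd : ∀ ε : ℝ, 0 < ε → dist x (f z) ≤ ε := by
        intro ε hε
        have h1 : f ⁻¹' Metric.ball (f z) ε ∈ 𝓝 z :=
          hf.continuousAt.preimage_mem_nhds (Metric.ball_mem_nhds _ hε)
        obtain ⟨k, hk⟩ := hbasis _ h1
        have h2 : f '' {y : ℕ → ℕ | ∀ i < k, y i = z i} ⊆ Metric.ball (f z) ε :=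
          (image_subset_iff).2 hk
        have h3 := (hcylk k)
        have h4 : x ∈ closure (Metric.ball (f z) ε) := closure_mono h2 h3
        have h5 := Metric.closure_ball_subset_closedBall h4
        rwa [Metric.mem_closedBall] at h5
      have h6 : dist x (f z) ≤ 0 := le_of_forall_pos_le_add (by intro ε hε; simpa using hd ε hε)
      exact eq_of_dist_eq_zero (le_antisymm h6 dist_nonneg)
    exact ⟨z, hxeq.symm⟩
  -- conclude
  have hup : Set.range f ⊆ bH (A []) ∪ (bU (A []) ∩ A []) := by
    rw [hrange]; exact subset_bH_union _
  have hmeag2 : IsMeagre ((bU (A []) ∩ A []) ∪ M) :=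
    isMeagre_union (isMeagre_bU_inter _) hMmeagre
  have hsub2 : ((bU (A []) ∩ A []) ∪ M)ᶜ ⊆ {x | x ∈ bH (A []) ↔ x ∈ Set.range f} := by
    intro x hx
    simp only [mem_compl_iff, mem_union, not_or] at hx
    obtain ⟨hx1, hx2⟩ := hx
    constructor
    · intro h1
      exact hmain ⟨h1, hx2⟩
    · intro h2
      rcases hup h2 with h | h
      · exact h
      · exact absurd h hx1
  exact BaireMeasurableSet.congr (((bU_open (A [])).baireMeasurableSet).compl)
    (Filter.eventuallyEq_set.2 (mem_of_superset hmeag2 hsub2))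

end AnalyticBP


theorem nonmeagre_of_isOpen {B : Type*} [TopologicalSpace B] [BaireSpace B] {U : Set B}
    (hU : IsOpen U) (hne : U.Nonempty) : ¬ IsMeagre U := by
  intro hm
  have hd : Dense (Uᶜ) := dense_of_mem_residual hm
  obtain ⟨x, hx1, hx2⟩ := hd.exists_mem_open hU hne
  exact hx1 hx2

theorem pettis {B : Type*} [Group B] [TopologicalSpace B] [IsTopologicalGroup B] [BaireSpace B]
    {A : Set B} (hA : BaireMeasurableSet A) (hnm : ¬ IsMeagre A) : A⁻¹ * A ∈ 𝓝 (1 : B) := by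
  obtain ⟨O, hO, hAO⟩ := hA.residualEq_isOpen
  set M₁ : Set B := {x | (x ∈ A) = (x ∈ O)}ᶜ with hM₁def
  have hM₁ : IsMeagre M₁ := by rw [IsMeagre, compl_compl]; exact hAO
  have hAeq : ∀ x : B, x ∉ M₁ → (x ∈ A ↔ x ∈ O) := by
    intro x hx
    rw [mem_compl_iff, mem_setOf_eq, not_not] at hx
    exact hx ▸ Iff.rfl
  have hOne : O.Nonempty := by
    rcases eq_empty_or_nonempty O with h | h
    · exfalso
      apply hnm
      refine hM₁.mono fun x hx => ?_
      intro hxM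
      rw [mem_setOf_eq] at hxM
      have hxO : x ∈ O := hxM ▸ hx
      rw [h] at hxO
      exact hxO
    · exact h
  obtain ⟨u₀, hu₀⟩ := hOne
  have hW : (fun g : B => u₀ * g) ⁻¹' O ∈ 𝓝 (1 : B) := by
    refine (hO.preimage (continuous_const.mul continuous_id)).mem_nhds ?_
    show u₀ * 1 ∈ O
    rwa [mul_one]
  refine mem_of_superset hW ?_
  intro g hg
  have hO₂ : IsOpen ((fun b : B => b * g) ⁻¹' O) :=
    hO.preimage (continuous_id.mul continuous_const)
  have hu₀O₂ : u₀ ∈ (fun b : B => b * g) ⁻¹' O := hg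
  have hM₁g : IsMeagre ((fun b : B => b * g) ⁻¹' M₁) :=
    hM₁.preimage_of_isOpenMap (continuous_id.mul continuous_const)
      (Homeomorph.mulRight g).isOpenMap
  have hne : ((O ∩ (fun b : B => b * g) ⁻¹' O) \ (M₁ ∪ (fun b : B => b * g) ⁻¹' M₁)).Nonempty := by
    by_contra h
    rw [not_nonempty_iff_eq_empty, diff_eq_empty] at h
    exact nonmeagre_of_isOpen (hO.inter hO₂) ⟨u₀, hu₀, hu₀O₂⟩ ((isMeagre_union hM₁ hM₁g).mono h)
  obtain ⟨b, ⟨hbO, hbO₂⟩, hbM⟩ := hne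
  rw [mem_union, not_or] at hbM
  obtain ⟨hbM₁, hbM₁g⟩ := hbM
  have hbA : b ∈ A := (hAeq b hbM₁).2 hbO
  have hbgA : b * g ∈ A := (hAeq (b * g) hbM₁g).2 hbO₂
  rw [Set.mem_mul]
  exact ⟨b⁻¹, Set.inv_mem_inv.2 hbA, b * g, hbgA, by rw [inv_mul_cancel_left]⟩

theorem image_nhds_one_of_surjective {G B : Type*} [Group G] [TopologicalSpace G]
    [IsTopologicalGroup G] [PolishSpace G] [Group B] [TopologicalSpace B] [IsTopologicalGroup B]
    [PolishSpace B] (ψ : G →* B) (hc : Continuous ψ) (hs : Function.Surjective ψ)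
    {U : Set G} (hU : U ∈ 𝓝 1) : ψ '' U ∈ 𝓝 (1 : B) := by
  haveI : BaireSpace B := by
    letI := TopologicalSpace.upgradeIsCompletelyMetrizable B
    infer_instance
  obtain ⟨W, Wopen, hW1, hWU⟩ := exists_open_nhds_one_mul_subset hU
  set V' : Set G := W ∩ W⁻¹ with hV'def
  have hV'open : IsOpen V' := Wopen.inter Wopen.inv
  have hV'1 : (1 : G) ∈ V' := ⟨hW1, by simpa using hW1⟩
  have hV'sub : V'⁻¹ * V' ⊆ U := by
    rintro _ ⟨a, ha, b, hb, rfl⟩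
    rw [Set.mem_inv] at ha
    exact hWU (Set.mul_mem_mul (by simpa using ha.2) hb.1)
  set A : Set B := ψ '' V' with hAdef
  have hABM : BaireMeasurableSet A := AnalyticSet.baireMeasurableSet (hV'open.analyticSet_image hc)
  have hAnm : ¬ IsMeagre A := by
    intro hm
    obtain ⟨D, hDc, hDd⟩ := TopologicalSpace.exists_countable_dense G
    haveI : Countable D := hDc.to_subtype
    have hcover : (univ : Set B) ⊆ ⋃ d : D, (fun x : B => ψ d * x) '' A := by
      intro b _
      obtain ⟨g, rfl⟩ := hs b
      have hopen : IsOpen ((fun d : G => d⁻¹ * g) ⁻¹' V') :=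
        hV'open.preimage (continuous_inv.mul continuous_const)
      have hgmem : g ∈ (fun d : G => d⁻¹ * g) ⁻¹' V' := by
        show g⁻¹ * g ∈ V'
        rwa [inv_mul_cancel]
      obtain ⟨d, hdD, hdV⟩ := hDd.exists_mem_open hopen ⟨g, hgmem⟩
      refine mem_iUnion.2 ⟨⟨d, hdD⟩, ⟨ψ (d⁻¹ * g), ⟨d⁻¹ * g, hdV, rfl⟩, ?_⟩⟩
      show ψ d * ψ (d⁻¹ * g) = ψ g
      rw [← map_mul, mul_inv_cancel_left]
    have hmeagre_univ : IsMeagre (univ : Set B) := by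
      refine (isMeagre_iUnion' fun d : D => ?_).mono hcover
      have heq : (fun x : B => ψ d * x) '' A =
          (Homeomorph.mulLeft (ψ (d : G))).symm ⁻¹' A :=
        (Homeomorph.mulLeft (ψ (d : G))).toEquiv.image_eq_preimage_symm A
      rw [heq]
      exact hm.preimage_of_isOpenMap (Homeomorph.mulLeft (ψ (d : G))).symm.continuous
        (Homeomorph.mulLeft (ψ (d : G))).symm.isOpenMap
    have hd : Dense ((univ : Set B)ᶜ) := dense_of_mem_residual hmeagre_univ
    rw [compl_univ] at hd
    exact absurd hd.nonempty (by simp [Set.not_nonempty_empty])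
  refine mem_of_superset (pettis hABM hAnm) ?_
  rintro _ ⟨a, ha, _, ⟨w, hw, rfl⟩, rfl⟩
  rw [Set.mem_inv] at ha
  obtain ⟨v, hv, hva⟩ := ha
  refine ⟨v⁻¹ * w, hV'sub (Set.mul_mem_mul (Set.inv_mem_inv.2 hv) hw), ?_⟩
  rw [map_mul, map_inv, hva, inv_inv]

theorem exists_nhds_mul_ker {G H : Type*} [Group G] [TopologicalSpace G] [IsTopologicalGroup G]
    [PolishSpace G] [Group H] [TopologicalSpace H] [IsTopologicalGroup H] [PolishSpace H]
    (φ : G →* H) (hφ : Continuous φ) (hclosed : IsClosed (Set.range φ))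
    {U : Set G} (hU : U ∈ 𝓝 1) :
    ∃ V ∈ 𝓝 (1 : H), ∀ g : G, φ g ∈ V → ∃ u ∈ U, ∃ k ∈ φ.ker, g = u * k := by
  haveI hpol : PolishSpace ↥φ.range := by
    have h : (φ.range : Set H) = Set.range φ := φ.coe_range
    have := (h ▸ hclosed : IsClosed (φ.range : Set H)).polishSpace
    exact this
  set ψ : G →* ↥φ.range := φ.rangeRestrict with hψdef
  have hψc : Continuous ψ := hφ.subtype_mk _
  have hψs : Function.Surjective ψ := φ.rangeRestrict_surjective
  have himg := image_nhds_one_of_surjective ψ hψc hψs hU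
  rw [mem_nhds_subtype] at himg
  obtain ⟨V, hV, hVsub⟩ := himg
  rw [show ((1 : ↥φ.range) : H) = (1 : H) from rfl] at hV
  refine ⟨V, hV, fun g hg => ?_⟩
  have h1 : ψ g ∈ Subtype.val ⁻¹' V := hg
  obtain ⟨u, hu, hupsi⟩ := hVsub h1
  refine ⟨u, hu, u⁻¹ * g, ?_, by rw [mul_inv_cancel_left]⟩
  have h2 : φ u = φ g := by
    have := congrArg (Subtype.val) hupsi
    exact this
  rw [MonoidHom.mem_ker, map_mul, map_inv, h2, inv_mul_cancel]


theorem partialProd_succ {G : Type*} [Monoid G] (x : ℕ → G) (n : ℕ) :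
    partialProd x (n + 1) = partialProd x n * x (n + 1) := by
  unfold partialProd
  rw [List.range_succ, List.map_append, List.prod_append]
  simp

theorem map_partialProd {G H : Type*} [Monoid G] [Monoid H] (φ : G →* H) (x : ℕ → G) (n : ℕ) :
    partialProd (fun p => φ (x p)) n = φ (partialProd x n) := by
  unfold partialProd
  rw [map_list_prod, List.map_map]
  rfl

end Auxiliary

/-- If `φ : G → H` is a continuous homomorphism of Polish groups with closed range and
non-archimedean kernel, then for every sequence `x → 1_G` the partial products of `x`
are ι-Cauchy iff the partial products of `φ ∘ x` are ι-Cauchy. -/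
theorem stmt_10 (G H : Type*) [Group G] [TopologicalSpace G] [IsTopologicalGroup G]
    [PolishSpace G] [Group H] [TopologicalSpace H] [IsTopologicalGroup H] [PolishSpace H]
    (φ : G →* H) (hφ : Continuous φ) (hclosed : IsClosed (Set.range φ))
    (hker : NonArchimedeanGroup ↥φ.ker) :
    ∀ x : ℕ → G, Tendsto x atTop (𝓝 1) →
      (IotaCauchy (partialProd x) ↔ IotaCauchy (partialProd (fun p => φ (x p)))) := by
  intro x hx
  rw [iotaCauchy_iff_leftCauchy, iotaCauchy_iff_leftCauchy]
  constructor
  · -- forward: continuous homomorphisms preserve left-Cauchyness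
    intro hlc V hV
    obtain ⟨N, hN⟩ := hlc (φ ⁻¹' V)
      (hφ.continuousAt.preimage_mem_nhds (by rwa [map_one]))
    refine ⟨N, fun p q hp hq => ?_⟩
    have h1 := hN p q hp hq
    rw [map_partialProd, map_partialProd, ← map_inv, ← map_mul]
    exact h1
  · -- backward
    intro hlc V hV
    -- symmetrize V
    have hWmem : V ∩ V⁻¹ ∈ 𝓝 (1 : G) := by
      refine Filter.inter_mem hV ?_
      have := inv_mem_nhds_one G hV
      exact this
    set W : Set G := V ∩ V⁻¹ with hWdef
    -- the left-invariant metric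
    obtain ⟨mG, hcompat, hinv⟩ := exists_leftInvariant_metric G
    set dd : G → G → ℝ := @dist G mG.toDist with hdd
    have hd1 : ∀ a b : G, dd 1 (a⁻¹ * b) = dd a b := by
      intro a b
      have h := hinv a⁻¹ a b
      rwa [inv_mul_cancel] at h
    have hddcomm : ∀ a b : G, dd a b = dd b a := fun a b =>
      @dist_comm G mG.toPseudoMetricSpace a b
    have hddtri : ∀ a b c : G, dd a c ≤ dd a b + dd b c := fun a b c =>
      @dist_triangle G mG.toPseudoMetricSpace a b c
    have hddself : ∀ a : G, dd a a = 0 := fun a => @dist_self G mG.toPseudoMetricSpace a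
    -- balls
    set Bs : ℝ → Set G := fun ε => {h : G | dd h 1 < ε} with hBs
    have hBnhds : ∀ ε : ℝ, 0 < ε → Bs ε ∈ 𝓝 (1 : G) := by
      intro ε hε
      have h1 : @Metric.ball G mG.toPseudoMetricSpace 1 ε ∈
          @nhds G mG.toUniformSpace.toTopologicalSpace 1 :=
        @Metric.ball_mem_nhds G mG.toPseudoMetricSpace 1 ε hε
      rw [hcompat] at h1
      exact h1
    have hBsub : ∀ V' ∈ 𝓝 (1 : G), ∃ ε : ℝ, 0 < ε ∧ Bs ε ⊆ V' := by
      intro V' hV'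
      rw [← hcompat] at hV'
      obtain ⟨ε, hε, hb⟩ := (@Metric.nhds_basis_ball G mG.toPseudoMetricSpace 1).mem_iff.1 hV'
      exact ⟨ε, hε, hb⟩
    obtain ⟨ε, hε, hballW⟩ := hBsub W hWmem
    -- choose the open subgroup K of the kernel inside the ε/2-ball
    have hS₀ : (Subtype.val : ↥φ.ker → G) ⁻¹' (Bs (ε / 2)) ∈ 𝓝 (1 : ↥φ.ker) := by
      refine continuous_subtype_val.continuousAt.preimage_mem_nhds ?_
      exact hBnhds _ (half_pos hε)
    obtain ⟨K', hK'open, hK'sub⟩ := hker _ hS₀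
    set Kset : Subgroup G := K'.map φ.ker.subtype with hKset
    have hKker : ∀ g : G, g ∈ Kset → g ∈ φ.ker := by
      intro g hg
      obtain ⟨y, _, rfl⟩ := Subgroup.mem_map.1 hg
      exact y.2
    have hKball : ∀ g : G, g ∈ Kset → dd g 1 < ε / 2 := by
      intro g hg
      obtain ⟨y, hy, rfl⟩ := Subgroup.mem_map.1 hg
      exact hK'sub hy
    obtain ⟨O, hOopen, hOpre⟩ := isOpen_induced_iff.1 hK'open
    have hO1 : (1 : G) ∈ O := by
      have h1 : (1 : ↥φ.ker) ∈ (K' : Set ↥φ.ker) := K'.one_mem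
      rw [← hOpre] at h1
      exact h1
    obtain ⟨δ₀, hδ₀, hδball⟩ := hBsub O (hOopen.mem_nhds hO1)
    have hKabs : ∀ g : G, (hg : g ∈ φ.ker) → dd g 1 < δ₀ → g ∈ Kset := by
      intro g hg hgd
      refine Subgroup.mem_map.2 ⟨⟨g, hg⟩, ?_, rfl⟩
      show (⟨g, hg⟩ : ↥φ.ker) ∈ (K' : Set ↥φ.ker)
      rw [← hOpre]
      exact hδball hgd
    set δ : ℝ := min δ₀ ε with hδdef
    have hδpos : 0 < δ := lt_min hδ₀ hε
    set α : ℝ := δ / 4 with hαdef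
    have hαpos : 0 < α := by positivity
    -- C1 : open mapping ingredient
    obtain ⟨VH, hVH, hVHp⟩ := exists_nhds_mul_ker φ hφ hclosed (hBnhds α hαpos)
    obtain ⟨N₁, hN₁⟩ := hlc VH hVH
    -- x → 1
    have hxball := hx (hBnhds α hαpos)
    rw [Filter.mem_map, Filter.mem_atTop_sets] at hxball
    obtain ⟨N₂, hN₂⟩ := hxball
    set N₀ := max N₁ N₂ with hN₀
    -- the inductive claim
    have hindc : ∀ p, N₀ ≤ p → ∀ q, p ≤ q →
        ∃ k, k ∈ Kset ∧ dd ((partialProd x p)⁻¹ * partialProd x q) k < α := by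
      intro p hp q hq
      induction q, hq using Nat.le_induction with
      | base =>
        refine ⟨1, Kset.one_mem, ?_⟩
        rw [inv_mul_cancel]
        rw [hddself]
        exact hαpos
      | succ q hq ih =>
        obtain ⟨k, hkK, hk⟩ := ih
        set t : G := (partialProd x p)⁻¹ * partialProd x q with ht
        have htsucc : (partialProd x p)⁻¹ * partialProd x (q + 1) = t * x (q + 1) := by
          rw [partialProd_succ, ht, mul_assoc]
        -- step smallness
        have hstep : dd (t * x (q + 1)) t = dd (x (q + 1)) 1 := by
          have h := hinv t (x (q + 1)) 1
          rwa [mul_one] at h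
        have hxsmall : dd (x (q + 1)) 1 < α := by
          have h := hN₂ (q + 1) (le_trans (le_trans (le_max_right N₁ N₂) hp) (by omega))
          exact h
        -- C1 applied to the new tail product
        have hφmem : φ ((partialProd x p)⁻¹ * partialProd x (q + 1)) ∈ VH := by
          have h := hN₁ p (q + 1) (le_trans (le_max_left N₁ N₂) hp)
            (le_trans (le_max_left N₁ N₂) (le_trans hp (by omega)))
          rwa [map_partialProd, map_partialProd, ← map_inv, ← map_mul] at h
        obtain ⟨uu, huu, kk, hkk, hgeq⟩ := hVHp _ hφmem
        set k' : G := uu * kk * uu⁻¹ with hk'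
        have hk'ker : k' ∈ φ.ker := Subgroup.Normal.conj_mem (MonoidHom.normal_ker φ) kk hkk uu
        have ht' : (partialProd x p)⁻¹ * partialProd x (q + 1) = k' * uu := by
          rw [hgeq, hk']
          group
        have hd3 : dd ((partialProd x p)⁻¹ * partialProd x (q + 1)) k' = dd uu 1 := by
          rw [ht']
          have h := hinv k' uu 1
          rwa [mul_one] at h
        have huusmall : dd uu 1 < α := huu
        -- k and k' are close
        have hkk' : dd k k' < 3 * α := by
          have h1 : dd k t < α := by rw [hddcomm]; exact hk
          have h2 : dd t (t * x (q + 1)) < α := by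
            rw [hddcomm, hstep]; exact hxsmall
          have h3 : dd (t * x (q + 1)) k' < α := by
            rw [← htsucc, hd3]
            exact huusmall
          have e1 := hddtri k t k'
          have e2 := hddtri t (t * x (q + 1)) k'
          linarith
        have hkinv : k⁻¹ * k' ∈ φ.ker := mul_mem (inv_mem (hKker k hkK)) hk'ker
        have hkinvd : dd (k⁻¹ * k') 1 < δ₀ := by
          rw [hddcomm, hd1]
          calc dd k k' < 3 * α := hkk'
            _ < δ := by rw [hαdef]; linarith
            _ ≤ δ₀ := min_le_left _ _
        have hk'K : k' ∈ Kset := by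
          have h := hKabs _ hkinv hkinvd
          have : k' = k * (k⁻¹ * k') := by group
          rw [this]
          exact mul_mem hkK h
        refine ⟨k', hk'K, ?_⟩
        rw [hd3]
        exact huusmall
    -- conclude
    refine ⟨N₀, fun p q hp hq => ?_⟩
    have hmain : ∀ p q, N₀ ≤ p → p ≤ q → (partialProd x p)⁻¹ * partialProd x q ∈ W := by
      intro p' q' hp' hq'
      obtain ⟨k, hkK, hk⟩ := hindc p' hp' q' hq'
      apply hballW
      show dd ((partialProd x p')⁻¹ * partialProd x q') 1 < ε
      calc dd ((partialProd x p')⁻¹ * partialProd x q') 1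
          ≤ dd ((partialProd x p')⁻¹ * partialProd x q') k + dd k 1 := hddtri _ _ _
        _ < α + ε / 2 := add_lt_add hk (hKball k hkK)
        _ ≤ ε := by
            have : α ≤ ε / 4 := by
              rw [hαdef]
              have : δ ≤ ε := min_le_right _ _
              linarith
            linarith
    rcases le_total p q with h | h
    · exact ((hmain p q hp h).1 : _)
    · have h1 := hmain q p hq h
      have h2 : (partialProd x p)⁻¹ * partialProd x q =
          ((partialProd x q)⁻¹ * partialProd x p)⁻¹ := by group
      rw [h2]
      exact Set.mem_inv.1 h1.2
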